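/- Let m and t be integers with m ≥ 2t ≥ 2, let q be a prime power and let F_q be the finite field with q elements. If there exists an [m, m−t]_q MDS code, then there exists a (C(m,t)·q^t, q^{m−t}, q^{m−t} − (q−1)^t·q^{m−2t}, q^m − q^{m−t}) placement delivery array, where C(m,t) denotes the binomial coefficient. -/

import Mathlib

/-- A `(K,F,S)` placement delivery array: an `F × K` array with entries in
`{*} ∪ {0,...,S-1}` (a star is modelled by `none`), such that every integer
appears at least once, and whenever two distinct cells contain the same
integer `s`, they lie in distinct rows and distinct columns and the two
cells at the remaining corners of the `2 × 2` subarray they determine are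
both stars. -/
def IsPDA (F K S : ℕ) (P : Fin F → Fin K → Option (Fin S)) : Prop :=
  (∀ s : Fin S, ∃ j k, P j k = some s) ∧
  ∀ (j₁ j₂ : Fin F) (k₁ k₂ : Fin K) (s : Fin S),
    (j₁, k₁) ≠ (j₂, k₂) → P j₁ k₁ = some s → P j₂ k₂ = some s →
      j₁ ≠ j₂ ∧ k₁ ≠ k₂ ∧ P j₁ k₂ = none ∧ P j₂ k₁ = none

/-- A `(K,F,Z,S)` placement delivery array: a `(K,F,S)` PDA each of whose
columns contains exactly `Z` stars. -/
def IsPDAWith (F K Z S : ℕ) (P : Fin F → Fin K → Option (Fin S)) : Prop :=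
  IsPDA F K S P ∧ ∀ k : Fin K, {j : Fin F | P j k = none}.ncard = Z

open Finset

private lemma two_pow_le_centralBinom (n : ℕ) : 2 ^ n ≤ Nat.centralBinom n := by
  induction n with
  | zero => simp [Nat.centralBinom]
  | succ n ih =>
    have key := Nat.succ_mul_centralBinom_succ n
    have h3 : (n + 1) * (2 * Nat.centralBinom n) ≤ (n + 1) * Nat.centralBinom (n + 1) := by
      rw [key]
      have : (n + 1) * (2 * Nat.centralBinom n) ≤ (2 * (2 * n + 1)) * Nat.centralBinom n := by
        have h4 : (n + 1) * 2 ≤ 2 * (2 * n + 1) := by omega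
        calc (n + 1) * (2 * Nat.centralBinom n) = ((n+1) * 2) * Nat.centralBinom n := by ring
        _ ≤ (2 * (2 * n + 1)) * Nat.centralBinom n := Nat.mul_le_mul_right _ h4
      exact this
    have h2 : 2 * Nat.centralBinom n ≤ Nat.centralBinom (n + 1) :=
      Nat.le_of_mul_le_mul_left h3 (Nat.succ_pos n)
    calc 2 ^ (n + 1) = 2 * 2 ^ n := by ring
    _ ≤ 2 * Nat.centralBinom n := by omega
    _ ≤ _ := h2

private lemma pda_master {R Cc V : Type} [Fintype R] [Fintype Cc] [DecidableEq V]
    (F K Z S : ℕ) (Q : R → Cc → Option V)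
    (hR : Fintype.card R = F) (hK : Fintype.card Cc = K)
    (hpair : ∀ (r₁ r₂ : R) (c₁ c₂ : Cc) (v : V), (r₁, c₁) ≠ (r₂, c₂) →
      Q r₁ c₁ = some v → Q r₂ c₂ = some v →
      r₁ ≠ r₂ ∧ c₁ ≠ c₂ ∧ Q r₁ c₂ = none ∧ Q r₂ c₁ = none)
    (hZ : ∀ c : Cc, (univ.filter fun r => Q r c = none).card = Z)
    (hT : S ≤ (univ.filter fun p : R × Cc => Q p.1 p.2 ≠ none).card)
    (hL : ((univ : Finset (R × Cc)).image fun p => Q p.1 p.2).eraseNone.card ≤ S) :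
    ∃ P : Fin F → Fin K → Option (Fin S), IsPDAWith F K Z S P := by
  classical
  obtain ⟨eR⟩ : Nonempty (Fin F ≃ R) := ⟨(Fintype.equivFinOfCardEq hR).symm⟩
  obtain ⟨eC⟩ : Nonempty (Fin K ≃ Cc) := ⟨(Fintype.equivFinOfCardEq hK).symm⟩
  set L : Finset V := ((univ : Finset (R × Cc)).image fun p => Q p.1 p.2).eraseNone with hLdef
  have memL : ∀ v : V, v ∈ L ↔ ∃ p : R × Cc, Q p.1 p.2 = some v := by
    intro v
    simp [hLdef, Finset.mem_eraseNone, Finset.mem_image]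
  have hrepex : ∀ w : L, ∃ p : R × Cc, Q p.1 p.2 = some w.1 := fun w => (memL w.1).mp w.2
  choose rep hrep using hrepex
  set A : Finset (R × Cc) := univ.filter (fun p : R × Cc => Q p.1 p.2 ≠ none) with hAdef
  set repImg : Finset (R × Cc) := (univ : Finset L).image rep with hrepImgdef
  set Acells : Finset (R × Cc) := A \ repImg with hAcellsdef
  have hcardL : Fintype.card L ≤ Fintype.card (Fin S) := by
    rw [Fintype.card_coe, Fintype.card_fin]; exact hL
  obtain ⟨ι⟩ := Function.Embedding.nonempty_of_card_le hcardL
  set ISet : Finset (Fin S) := (univ : Finset L).image ι with hISetdef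
  set B : Finset (Fin S) := univ \ ISet with hBdef
  have hBcard : B.card = S - L.card := by
    rw [hBdef, card_sdiff_of_subset (subset_univ _), card_univ, Fintype.card_fin, hISetdef,
      Finset.card_image_of_injective _ ι.injective, card_univ, Fintype.card_coe]
  have hAcard : B.card ≤ Acells.card := by
    have h1 : A.card - repImg.card ≤ Acells.card := le_card_sdiff _ _
    have h2 : repImg.card ≤ L.card := by
      refine le_trans Finset.card_image_le ?_
      rw [card_univ, Fintype.card_coe]
    omega
  obtain ⟨hEmb⟩ : Nonempty (B ↪ Acells) := Function.Embedding.nonempty_of_card_le (by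
    rw [Fintype.card_coe, Fintype.card_coe]; exact hAcard)
  set Pf : Fin F → Fin K → Option (Fin S) := fun j k =>
    if hq : ∃ v, Q (eR j) (eC k) = some v then
      some (if hp : ∃ sb : B, ((hEmb sb : Acells) : R × Cc) = (eR j, eC k) then (hp.choose : Fin S)
        else ι ⟨hq.choose, (memL _).mpr ⟨(eR j, eC k), hq.choose_spec⟩⟩)
    else none with hPfdef
  have hPnone : ∀ j k, (Pf j k = none ↔ Q (eR j) (eC k) = none) := by
    intro j k
    by_cases hq : ∃ v, Q (eR j) (eC k) = some v
    · obtain ⟨v, hv⟩ := hq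
      simp only [hPfdef, dif_pos (⟨v, hv⟩ : ∃ v, Q (eR j) (eC k) = some v)]
      simp [hv]
    · simp only [hPfdef, dif_neg hq]
      rcases h : Q (eR j) (eC k) with _ | v
      · simp
      · exact absurd ⟨v, h⟩ hq
  have hcell_ne : ∀ (j₁ j₂ : Fin F) (k₁ k₂ : Fin K), (j₁, k₁) ≠ (j₂, k₂) →
      ((eR j₁, eC k₁) : R × Cc) ≠ (eR j₂, eC k₂) := by
    intro j₁ j₂ k₁ k₂ hne h
    rw [Prod.ext_iff] at h
    exact hne (Prod.ext_iff.mpr ⟨eR.injective h.1, eC.injective h.2⟩)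
  have hpair' : ∀ (j₁ j₂ : Fin F) (k₁ k₂ : Fin K) (s : Fin S),
      (j₁, k₁) ≠ (j₂, k₂) → Pf j₁ k₁ = some s → Pf j₂ k₂ = some s →
      j₁ ≠ j₂ ∧ k₁ ≠ k₂ ∧ Pf j₁ k₂ = none ∧ Pf j₂ k₁ = none := by
    intro j₁ j₂ k₁ k₂ s hne h₁ h₂
    have hq₁ : ∃ v, Q (eR j₁) (eC k₁) = some v := by
      by_contra h
      rw [hPfdef] at h₁; simp only [dif_neg h] at h₁; exact Option.some_ne_none _ h₁.symm
    have hq₂ : ∃ v, Q (eR j₂) (eC k₂) = some v := by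
      by_contra h
      rw [hPfdef] at h₂; simp only [dif_neg h] at h₂; exact Option.some_ne_none _ h₂.symm
    rw [hPfdef] at h₁ h₂
    simp only [dif_pos hq₁] at h₁
    simp only [dif_pos hq₂] at h₂
    have h₁' := Option.some_injective _ h₁
    have h₂' := Option.some_injective _ h₂
    clear h₁ h₂
    have hcell := hcell_ne j₁ j₂ k₁ k₂ hne
    by_cases hp₁ : ∃ sb : B, ((hEmb sb : Acells) : R × Cc) = (eR j₁, eC k₁) <;>
      by_cases hp₂ : ∃ sb : B, ((hEmb sb : Acells) : R × Cc) = (eR j₂, eC k₂)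
    · rw [dif_pos hp₁] at h₁'
      rw [dif_pos hp₂] at h₂'
      exfalso
      have : hp₁.choose = hp₂.choose := Subtype.coe_injective (h₁'.trans h₂'.symm)
      apply hcell
      rw [← hp₁.choose_spec, ← hp₂.choose_spec, this]
    · rw [dif_pos hp₁] at h₁'
      rw [dif_neg hp₂] at h₂'
      exfalso
      have hsB : s ∈ univ \ ISet := h₁' ▸ hp₁.choose.2
      have hsI : s ∈ ISet := mem_image.mpr ⟨_, mem_univ _, h₂'⟩
      exact (mem_sdiff.mp hsB).2 hsI
    · rw [dif_neg hp₁] at h₁'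
      rw [dif_pos hp₂] at h₂'
      exfalso
      have hsB : s ∈ univ \ ISet := h₂' ▸ hp₂.choose.2
      have hsI : s ∈ ISet := mem_image.mpr ⟨_, mem_univ _, h₁'⟩
      exact (mem_sdiff.mp hsB).2 hsI
    · rw [dif_neg hp₁] at h₁'
      rw [dif_neg hp₂] at h₂'
      have hvv : hq₁.choose = hq₂.choose := by
        have := ι.injective (h₁'.trans h₂'.symm)
        exact congrArg Subtype.val this
      obtain ⟨hr, hc, hx₁, hx₂⟩ := hpair (eR j₁) (eR j₂) (eC k₁) (eC k₂) hq₁.choose hcell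
        hq₁.choose_spec (hvv ▸ hq₂.choose_spec)
      refine ⟨fun h => hr (congrArg eR h), fun h => hc (congrArg eC h),
        (hPnone _ _).mpr hx₁, (hPnone _ _).mpr hx₂⟩
  have hsurj : ∀ s : Fin S, ∃ j k, Pf j k = some s := by
    intro s
    by_cases hs : s ∈ ISet
    · rw [hISetdef] at hs
      obtain ⟨w, -, hw⟩ := mem_image.mp hs
      refine ⟨eR.symm (rep w).1, eC.symm (rep w).2, ?_⟩
      have hcell : ((eR (eR.symm (rep w).1), eC (eC.symm (rep w).2)) : R × Cc) = rep w := by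
        simp [Prod.ext_iff]
      have hq : ∃ v, Q (eR (eR.symm (rep w).1)) (eC (eC.symm (rep w).2)) = some v := by
        refine ⟨w.1, ?_⟩
        have := hrep w
        simp only [Equiv.apply_symm_apply]
        exact this
      rw [hPfdef]
      simp only [dif_pos hq]
      have hp : ¬ ∃ sb : B, ((hEmb sb : Acells) : R × Cc)
          = (eR (eR.symm (rep w).1), eC (eC.symm (rep w).2)) := by
        rintro ⟨sb, hsb⟩
        have hmem : ((hEmb sb : Acells) : R × Cc) ∈ A \ repImg := (hEmb sb).2
        rw [mem_sdiff] at hmem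
        apply hmem.2
        rw [hsb, hcell, hrepImgdef]
        exact mem_image.mpr ⟨w, mem_univ _, rfl⟩
      rw [dif_neg hp]
      have hv : hq.choose = w.1 := by
        have h2 : Q (eR (eR.symm (rep w).1)) (eC (eC.symm (rep w).2)) = some w.1 := by
          rw [Equiv.apply_symm_apply, Equiv.apply_symm_apply]; exact hrep w
        exact Option.some_injective _ (hq.choose_spec.symm.trans h2)
      exact congrArg some ((congrArg ι (Subtype.ext hv)).trans hw)
    · have hsB : s ∈ B := mem_sdiff.mpr ⟨mem_univ _, hs⟩
      set sb : B := ⟨s, hsB⟩ with hsbdef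
      set p₁ : R × Cc := ((hEmb sb : Acells) : R × Cc) with hp₁def
      have hp₁A : p₁ ∈ A := by
        have h : ((hEmb sb : Acells) : R × Cc) ∈ A \ repImg := (hEmb sb).2
        exact (mem_sdiff.mp h).1
      have hp₁ne : Q p₁.1 p₁.2 ≠ none := by
        rw [hAdef, mem_filter] at hp₁A
        exact hp₁A.2
      refine ⟨eR.symm p₁.1, eC.symm p₁.2, ?_⟩
      have hcell : ((eR (eR.symm p₁.1), eC (eC.symm p₁.2)) : R × Cc) = p₁ := by
        simp [Prod.ext_iff]
      have hq : ∃ v, Q (eR (eR.symm p₁.1)) (eC (eC.symm p₁.2)) = some v := by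
        rw [show (eR (eR.symm p₁.1)) = p₁.1 by simp, show (eC (eC.symm p₁.2)) = p₁.2 by simp]
        exact Option.ne_none_iff_exists'.mp hp₁ne
      rw [hPfdef]
      simp only [dif_pos hq]
      have hp : ∃ sb' : B, ((hEmb sb' : Acells) : R × Cc)
          = (eR (eR.symm p₁.1), eC (eC.symm p₁.2)) := ⟨sb, by rw [hcell]⟩
      rw [dif_pos hp]
      have : hp.choose = sb := by
        have h1 : ((hEmb hp.choose : Acells) : R × Cc) = ((hEmb sb : Acells) : R × Cc) :=
          hp.choose_spec.trans hcell
        exact hEmb.injective (Subtype.coe_injective h1)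
      exact congrArg (fun x : B => some x.1) this
  have hcols : ∀ k : Fin K, {j : Fin F | Pf j k = none}.ncard = Z := by
    intro k
    have hset : {j : Fin F | Pf j k = none} = {j : Fin F | Q (eR j) (eC k) = none} := by
      ext j; exact hPnone j k
    rw [hset, Set.ncard_eq_toFinset_card', Set.toFinset_setOf, ← hZ (eC k)]
    apply Finset.card_bij (fun j _ => eR j)
    · intro j hj
      rw [mem_filter] at hj ⊢
      exact ⟨mem_univ _, hj.2⟩
    · intro a ha b hb hab
      exact eR.injective hab
    · intro r hr
      refine ⟨eR.symm r, ?_, by simp⟩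
      rw [mem_filter] at hr ⊢
      refine ⟨mem_univ _, ?_⟩
      rw [Equiv.apply_symm_apply]
      exact hr.2
  exact ⟨Pf, ⟨hsurj, hpair'⟩, hcols⟩

/-- Theorem 8: let `m ≥ 2t ≥ 2`, let `q` be a prime power and `F_q` (here the
type `K`) the finite field with `q` elements.  If there exists an
`[m, m−t]_q` MDS code (an `(m−t)`-dimensional subspace of `K^m` all of whose
nonzero vectors have Hamming weight at least `m − (m−t) + 1`), then there
exists a `(C(m,t)·q^t, q^{m−t}, q^{m−t} − (q−1)^t·q^{m−2t}, q^m − q^{m−t})`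
placement delivery array. -/
theorem exists_PDA_of_MDS (m t q : ℕ) (ht : 1 ≤ t) (hmt : 2 * t ≤ m)
    (hq : IsPrimePow q)
    (K : Type) [Field K] [Fintype K] [DecidableEq K]
    (hcard : Fintype.card K = q)
    (hMDS : ∃ C : Submodule K (Fin m → K), Module.finrank K C = m - t ∧
      ∀ c ∈ C, c ≠ 0 → m - (m - t) + 1 ≤ hammingNorm c) :
    ∃ P : Fin (q ^ (m - t)) → Fin (m.choose t * q ^ t) →
        Option (Fin (q ^ m - q ^ (m - t))),
      IsPDAWith (q ^ (m - t)) (m.choose t * q ^ t)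
        (q ^ (m - t) - (q - 1) ^ t * q ^ (m - 2 * t))
        (q ^ m - q ^ (m - t)) P := by
  classical
  obtain ⟨C, hrank, hwt⟩ := hMDS
  have hq2 : 2 ≤ q := hq.two_le
  have htm : t ≤ m := by omega
  have htmt : t ≤ m - t := by omega
  -- a codeword supported on at most t coordinates is zero
  have hzero : ∀ x : Fin m → K, x ∈ C → ∀ s : Finset (Fin m), s.card ≤ t →
      (∀ i, i ∉ s → x i = 0) → x = 0 := by
    intro x hx s hs h
    by_contra hne
    have h1 := hwt x hx hne
    have hmm : m - (m - t) = t := by omega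
    rw [hmm] at h1
    have h2 : hammingNorm x ≤ s.card := by
      have : hammingNorm x = (univ.filter fun i => x i ≠ 0).card := rfl
      rw [this]
      apply Finset.card_le_card
      intro i hi
      rw [mem_filter] at hi
      by_contra his
      exact hi.2 (h i his)
    omega
  have hCcard : Fintype.card ↥C = q ^ (m - t) := by
    rw [Module.card_eq_pow_finrank (K := K) (V := ↥C), hcard, hrank]
  -- the column type
  set Col : Type := {p : Finset (Fin m) × (Fin m → K) //
    p.1.card = t ∧ ∀ i, i ∉ p.1 → p.2 i = 0} with hColdef
  have hColcard : Fintype.card Col = m.choose t * q ^ t := by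
    have e1 : Col ≃ Σ τ : {s : Finset (Fin m) // s.card = t},
        {b : Fin m → K // ∀ i, i ∉ τ.1 → b i = 0} :=
      { toFun := fun p => ⟨⟨p.1.1, p.2.1⟩, ⟨p.1.2, p.2.2⟩⟩
        invFun := fun x => ⟨(x.1.1, x.2.1), ⟨x.1.2, x.2.2⟩⟩
        left_inv := fun p => rfl
        right_inv := fun x => rfl }
    rw [Fintype.card_congr e1, Fintype.card_sigma]
    have e2 : ∀ τ : {s : Finset (Fin m) // s.card = t},
        Fintype.card {b : Fin m → K // ∀ i, i ∉ τ.1 → b i = 0} = q ^ t := by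
      intro τ
      rw [Fintype.card_congr
        (Equiv.subtypePiEquivPi (p := fun (i : Fin m) (x : K) => i ∉ τ.1 → x = 0)),
        Fintype.card_pi]
      have : ∀ i : Fin m, Fintype.card {x : K // i ∉ τ.1 → x = 0}
          = if i ∈ τ.1 then q else 1 := by
        intro i
        by_cases hi : i ∈ τ.1
        · rw [if_pos hi, ← hcard]
          exact Fintype.card_congr (Equiv.subtypeUnivEquiv fun x h => absurd hi h)
        · rw [if_neg hi]
          rw [Fintype.card_congr (Equiv.subtypeEquivRight (q := fun x : K => x = 0)
            (fun x => by simp [hi]))]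
          exact Fintype.card_subtype_eq (0 : K)
      rw [Finset.prod_congr rfl (fun i _ => this i), Finset.prod_ite_mem,
        Finset.univ_inter, Finset.prod_const, τ.2]
    rw [Finset.sum_congr rfl (fun τ _ => e2 τ), Finset.sum_const, card_univ,
      Fintype.card_finset_len, Fintype.card_fin, smul_eq_mul]
  -- the pre-PDA
  set Qf : ↥C → Col → Option (Fin m → K) := fun c col =>
    if ∀ i ∈ col.1.1, c.1 i ≠ col.1.2 i then
      some (fun i => if i ∈ col.1.1 then col.1.2 i else c.1 i)
    else none with hQfdef
  have hQsome : ∀ (c : ↥C) (col : Col) (v : Fin m → K), Qf c col = some v →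
      (∀ i ∈ col.1.1, c.1 i ≠ col.1.2 i) ∧
        v = fun i => if i ∈ col.1.1 then col.1.2 i else c.1 i := by
    intro c col v h
    simp only [hQfdef] at h
    by_cases hcond : ∀ i ∈ col.1.1, c.1 i ≠ col.1.2 i
    · rw [if_pos hcond] at h
      exact ⟨hcond, (Option.some_injective _ h).symm⟩
    · rw [if_neg hcond] at h
      exact (Option.some_ne_none _ h.symm).elim
  have hQnone : ∀ (c : ↥C) (col : Col),
      Qf c col = none ↔ ¬ (∀ i ∈ col.1.1, c.1 i ≠ col.1.2 i) := by
    intro c col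
    simp only [hQfdef, ite_eq_right_iff]
    constructor
    · intro h hc
      exact Option.some_ne_none _ (h hc)
    · intro h hc
      exact absurd hc h
  have hQnn : ∀ (c : ↥C) (col : Col),
      Qf c col ≠ none ↔ (∀ i ∈ col.1.1, c.1 i ≠ col.1.2 i) := by
    intro c col
    rw [Ne, hQnone c col, not_not]
  have hkey : ∀ (c : ↥C) (col : Col) (v : Fin m → K), Qf c col = some v →
      ∀ i, (v i ≠ c.1 i ↔ i ∈ col.1.1) := by
    intro c col v h i
    obtain ⟨hcond, hv⟩ := hQsome c col v h
    by_cases hi : i ∈ col.1.1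
    · simp only [hv, if_pos hi]
      exact ⟨fun _ => hi, fun _ => Ne.symm (hcond i hi)⟩
    · simp only [hv, if_neg hi]
      exact ⟨fun hcc => absurd rfl hcc, fun hiτ => absurd hiτ hi⟩
  -- the pair condition
  have hpairQ : ∀ (r₁ r₂ : ↥C) (col₁ col₂ : Col) (v : Fin m → K),
      (r₁, col₁) ≠ (r₂, col₂) → Qf r₁ col₁ = some v → Qf r₂ col₂ = some v →
      r₁ ≠ r₂ ∧ col₁ ≠ col₂ ∧ Qf r₁ col₂ = none ∧ Qf r₂ col₁ = none := by
    intro r₁ r₂ col₁ col₂ v hne h₁ h₂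
    obtain ⟨hcond₁, hv₁⟩ := hQsome r₁ col₁ v h₁
    obtain ⟨hcond₂, hv₂⟩ := hQsome r₂ col₂ v h₂
    have key₁ := hkey r₁ col₁ v h₁
    have key₂ := hkey r₂ col₂ v h₂
    have hbb : col₁.1.1 = col₂.1.1 → col₁.1.2 = col₂.1.2 := by
      intro hτ; funext i
      by_cases hi : i ∈ col₁.1.1
      · have e1 : v i = col₁.1.2 i := by rw [hv₁]; exact if_pos hi
        have e2 : v i = col₂.1.2 i := by rw [hv₂]; exact if_pos (hτ ▸ hi)
        rw [← e1, ← e2]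
      · have hi₂ : i ∉ col₂.1.1 := by rw [← hτ]; exact hi
        rw [col₁.2.2 i hi, col₂.2.2 i hi₂]
    have hcc : col₁.1.1 = col₂.1.1 → r₁ = r₂ := by
      intro hτ
      have hx0 : r₁.1 - r₂.1 = 0 := by
        apply hzero _ (sub_mem r₁.2 r₂.2) col₁.1.1 (le_of_eq col₁.2.1)
        intro i hi
        have hi₂ : i ∉ col₂.1.1 := by rw [← hτ]; exact hi
        have e1 : v i = r₁.1 i := not_not.mp (fun hne' => hi ((key₁ i).mp hne'))
        have e2 : v i = r₂.1 i := not_not.mp (fun hne' => hi₂ ((key₂ i).mp hne'))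
        rw [Pi.sub_apply, ← e1, ← e2, sub_self]
      exact Subtype.ext (sub_eq_zero.mp hx0)
    have hcoleq : col₁.1.1 = col₂.1.1 → col₁ = col₂ := fun hτ =>
      Subtype.ext (Prod.ext hτ (hbb hτ))
    have hmain₁ : ¬ (∀ i ∈ col₂.1.1, r₁.1 i ≠ col₂.1.2 i) := by
      intro hcross
      have hsub : col₂.1.1 ⊆ col₁.1.1 := by
        intro i hi
        apply (key₁ i).mp
        have e2 : v i = col₂.1.2 i := by rw [hv₂]; exact if_pos hi
        rw [e2]; exact Ne.symm (hcross i hi)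
      have hτ : col₁.1.1 = col₂.1.1 :=
        (Finset.eq_of_subset_of_card_le hsub (by rw [col₁.2.1, col₂.2.1])).symm
      exact hne (by rw [hcc hτ, hcoleq hτ])
    have hmain₂ : ¬ (∀ i ∈ col₁.1.1, r₂.1 i ≠ col₁.1.2 i) := by
      intro hcross
      have hsub : col₁.1.1 ⊆ col₂.1.1 := by
        intro i hi
        apply (key₂ i).mp
        have e1 : v i = col₁.1.2 i := by rw [hv₁]; exact if_pos hi
        rw [e1]; exact Ne.symm (hcross i hi)
      have hτ : col₁.1.1 = col₂.1.1 :=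
        Finset.eq_of_subset_of_card_le hsub (by rw [col₁.2.1, col₂.2.1])
      exact hne (by rw [hcc hτ, hcoleq hτ])
    refine ⟨?_, ?_, (hQnone r₁ col₂).mpr hmain₁, (hQnone r₂ col₁).mpr hmain₂⟩
    · intro hr
      have hτ : col₁.1.1 = col₂.1.1 := by
        ext i
        rw [← key₁ i, ← key₂ i, hr]
      exact hne (by rw [hr, hcoleq hτ])
    · intro hc
      exact hne (by rw [hcc (congrArg (fun x : Col => x.1.1) hc), hc])
  -- the per-column count of non-stars
  have hNS : ∀ col : Col,
      (univ.filter fun c : ↥C => ∀ i ∈ col.1.1, c.1 i ≠ col.1.2 i).card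
        = (q - 1) ^ t * q ^ (m - 2 * t) := by
    intro col
    obtain ⟨J, hτJ, hJcard⟩ : ∃ J : Finset (Fin m), col.1.1 ⊆ J ∧ J.card = m - t := by
      obtain ⟨J, h1, _, h3⟩ := Finset.exists_subsuperset_card_eq (n := m - t)
        (subset_univ col.1.1) (le_of_eq_of_le col.2.1 htmt)
        (by rw [card_univ, Fintype.card_fin]; omega)
      exact ⟨J, h1, h3⟩
    have hφinj : Function.Injective (fun (c : ↥C) (i : ↥J) => c.1 i.1) := by
      intro c₁ c₂ h
      have hx : c₁.1 - c₂.1 = 0 := by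
        apply hzero _ (sub_mem c₁.2 c₂.2) Jᶜ
        · rw [Finset.card_compl, Fintype.card_fin, hJcard]; omega
        · intro i hi
          have hiJ : i ∈ J := by
            by_contra hiJ
            exact hi (Finset.mem_compl.mpr hiJ)
          have h5 : (c₁ : Fin m → K) i = (c₂ : Fin m → K) i := congrFun h ⟨i, hiJ⟩
          rw [Pi.sub_apply, h5, sub_self]
      exact Subtype.ext (sub_eq_zero.mp hx)
    have hJfun : Fintype.card (↥J → K) = q ^ (m - t) := by
      rw [Fintype.card_fun, hcard, Fintype.card_coe, hJcard]
    have hφbij : Function.Bijective (fun (c : ↥C) (i : ↥J) => c.1 i.1) :=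
      (Fintype.bijective_iff_injective_and_card _).mpr ⟨hφinj, by rw [hCcard, hJfun]⟩
    set e : ↥C ≃ (↥J → K) := Equiv.ofBijective _ hφbij with hedef
    have hψsurj : ∀ y : (↥(col.1.1) → K), ∃ c : ↥C,
        (fun i : ↥(col.1.1) => c.1 i.1) = y := by
      intro y
      refine ⟨e.symm (fun i : ↥J => if h : i.1 ∈ col.1.1 then y ⟨i.1, h⟩ else 0), ?_⟩
      funext i
      have h1 : (fun (j : ↥J) => (e.symm (fun i : ↥J =>
          if h : i.1 ∈ col.1.1 then y ⟨i.1, h⟩ else 0)).1 j.1)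
          = (fun i : ↥J => if h : i.1 ∈ col.1.1 then y ⟨i.1, h⟩ else 0) :=
        e.apply_symm_apply _
      have h2 := congrFun h1 ⟨i.1, hτJ i.2⟩
      simp only at h2
      rw [h2, dif_pos i.2]
    set Fib : (↥(col.1.1) → K) → Finset ↥C := fun y =>
      univ.filter (fun c : ↥C => (fun i : ↥(col.1.1) => c.1 i.1) = y) with hFibdef
    have hfibmem : ∀ (y : ↥(col.1.1) → K) (c : ↥C),
        c ∈ Fib y ↔ (fun i : ↥(col.1.1) => c.1 i.1) = y := by
      intro y c
      rw [hFibdef, mem_filter]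
      exact ⟨fun h => h.2, fun h => ⟨mem_univ _, h⟩⟩
    have hfib : ∀ y, (Fib y).card = (Fib 0).card := by
      intro y
      obtain ⟨c₀, hc₀⟩ := hψsurj y
      apply Finset.card_bij' (fun c _ => c - c₀) (fun c _ => c + c₀)
      · intro c hc
        rw [hfibmem] at hc ⊢
        funext i
        have e1 := congrFun hc i
        have e2 := congrFun hc₀ i
        show (c - c₀).1 i.1 = (0 : ↥(col.1.1) → K) i
        rw [Submodule.coe_sub, Pi.sub_apply, e1, e2, sub_self]
        rfl
      · intro c hc
        rw [hfibmem] at hc ⊢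
        funext i
        have e1 := congrFun hc i
        have e2 := congrFun hc₀ i
        show (c + c₀).1 i.1 = y i
        rw [Submodule.coe_add, Pi.add_apply, e1, e2]
        have : (0 : ↥(col.1.1) → K) i = 0 := rfl
        rw [this, zero_add]
      · intro c _
        exact sub_add_cancel c c₀
      · intro c _
        exact add_sub_cancel_right c c₀
    have hcardsum : q ^ (m - t) = q ^ t * (Fib 0).card := by
      have h0 : (univ : Finset ↥C).card
          = ∑ y ∈ (univ : Finset (↥(col.1.1) → K)),
            (univ.filter fun c : ↥C => (fun i : ↥(col.1.1) => c.1 i.1) = y).card :=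
        Finset.card_eq_sum_card_fiberwise (fun _ _ => mem_univ _)
      rw [card_univ, hCcard] at h0
      rw [h0]
      have h1 : ∀ y ∈ (univ : Finset (↥(col.1.1) → K)),
          (univ.filter fun c : ↥C => (fun i : ↥(col.1.1) => c.1 i.1) = y).card
            = (Fib 0).card := fun y _ => hfib y
      rw [Finset.sum_congr rfl h1, Finset.sum_const, card_univ, smul_eq_mul,
        Fintype.card_fun, hcard, Fintype.card_coe, col.2.1]
    have hfib0 : (Fib 0).card = q ^ (m - 2 * t) := by
      have hqt : 0 < q ^ t := pow_pos (by omega) t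
      have hps : q ^ (m - t) = q ^ t * q ^ (m - 2 * t) := by
        rw [← pow_add]; congr 1; omega
      exact Nat.eq_of_mul_eq_mul_left hqt (hcardsum.symm.trans hps)
    set Bad : Finset (↥(col.1.1) → K) :=
      univ.filter (fun y : ↥(col.1.1) → K => ∀ i : ↥(col.1.1), y i ≠ col.1.2 i.1)
      with hBaddef
    have hBadcard : Bad.card = (q - 1) ^ t := by
      rw [hBaddef, ← Fintype.card_subtype]
      rw [Fintype.card_congr (Equiv.subtypePiEquivPi
        (p := fun (i : ↥(col.1.1)) (x : K) => x ≠ col.1.2 i.1)), Fintype.card_pi]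
      have h1 : ∀ i : ↥(col.1.1), Fintype.card {x : K // x ≠ col.1.2 i.1} = q - 1 := by
        intro i
        have := Fintype.card_subtype_compl (fun x : K => x = col.1.2 i.1)
        rw [Fintype.card_subtype_eq, hcard] at this
        exact this
      rw [Finset.prod_congr rfl (fun i _ => h1 i), Finset.prod_const, card_univ,
        Fintype.card_coe, col.2.1]
    have hstep : (univ.filter fun c : ↥C => ∀ i ∈ col.1.1, c.1 i ≠ col.1.2 i).card
        = ∑ y ∈ Bad, ((univ.filter fun c : ↥C =>
            ∀ i ∈ col.1.1, c.1 i ≠ col.1.2 i).filter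
              fun c => (fun i : ↥(col.1.1) => c.1 i.1) = y).card := by
      apply Finset.card_eq_sum_card_fiberwise
      intro c hc
      rw [Finset.mem_coe, mem_filter] at hc
      rw [Finset.mem_coe, hBaddef, mem_filter]
      exact ⟨mem_univ _, fun i => hc.2 i.1 i.2⟩
    rw [hstep]
    have h2 : ∀ y ∈ Bad, ((univ.filter fun c : ↥C =>
        ∀ i ∈ col.1.1, c.1 i ≠ col.1.2 i).filter
          fun c => (fun i : ↥(col.1.1) => c.1 i.1) = y).card = (Fib 0).card := by
      intro y hy
      rw [hBaddef, mem_filter] at hy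
      have : ((univ.filter fun c : ↥C => ∀ i ∈ col.1.1, c.1 i ≠ col.1.2 i).filter
          fun c => (fun i : ↥(col.1.1) => c.1 i.1) = y) = Fib y := by
        ext c
        rw [mem_filter, mem_filter, hfibmem]
        constructor
        · exact fun h => h.2
        · intro h
          refine ⟨⟨mem_univ _, ?_⟩, h⟩
          intro i hi
          have := congrFun h ⟨i, hi⟩
          simp only at this
          rw [this]
          exact hy.2 ⟨i, hi⟩
      rw [this, hfib y]
    rw [Finset.sum_congr rfl h2, Finset.sum_const, smul_eq_mul, hBadcard, hfib0]
  -- column star count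
  have hZQ : ∀ col : Col, (univ.filter fun c : ↥C => Qf c col = none).card
      = q ^ (m - t) - (q - 1) ^ t * q ^ (m - 2 * t) := by
    intro col
    have h1 : (univ.filter fun c : ↥C => Qf c col = none)
        = univ.filter fun c : ↥C => ¬ (∀ i ∈ col.1.1, c.1 i ≠ col.1.2 i) := by
      apply Finset.filter_congr
      intro c _
      rw [hQnone c col]
    rw [h1]
    have h2 := Finset.card_filter_add_card_filter_not
      (s := (univ : Finset ↥C)) (p := fun c : ↥C => ∀ i ∈ col.1.1, c.1 i ≠ col.1.2 i)
    rw [card_univ, hCcard, hNS col] at h2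
    omega
  -- total non-stars
  have hTQ : q ^ m - q ^ (m - t)
      ≤ (univ.filter fun p : ↥C × Col => Qf p.1 p.2 ≠ none).card := by
    have htot : (univ.filter fun p : ↥C × Col => Qf p.1 p.2 ≠ none).card
        = Fintype.card Col * ((q - 1) ^ t * q ^ (m - 2 * t)) := by
      rw [Finset.card_eq_sum_card_fiberwise
        (f := fun p : ↥C × Col => p.2) (t := univ) (fun _ _ => mem_univ _)]
      have h1 : ∀ col ∈ (univ : Finset Col),
          ((univ.filter fun p : ↥C × Col => Qf p.1 p.2 ≠ none).filter
            fun p => p.2 = col).card = (q - 1) ^ t * q ^ (m - 2 * t) := by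
        intro col _
        rw [← hNS col]
        apply Finset.card_bij (fun p _ => p.1)
        · intro p hp
          rw [mem_filter, mem_filter] at hp
          rw [mem_filter]
          refine ⟨mem_univ _, ?_⟩
          have := (hQnn p.1 p.2).mp hp.1.2
          rw [hp.2] at this
          exact this
        · intro p₁ hp₁ p₂ hp₂ hpp
          rw [mem_filter, mem_filter] at hp₁ hp₂
          exact Prod.ext hpp (hp₁.2.trans hp₂.2.symm)
        · intro c hc
          rw [mem_filter] at hc
          refine ⟨(c, col), ?_, rfl⟩
          rw [mem_filter, mem_filter]
          exact ⟨⟨mem_univ _, (hQnn c col).mpr hc.2⟩, rfl⟩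
      rw [Finset.sum_congr rfl h1, Finset.sum_const, card_univ, smul_eq_mul]
    rw [htot, hColcard]
    have h1 : q ^ t - 1 ≤ m.choose t * (q - 1) ^ t := by
      calc q ^ t - 1 ≤ q ^ t := Nat.sub_le _ _
      _ ≤ (2 * (q - 1)) ^ t := Nat.pow_le_pow_left (by omega) t
      _ = 2 ^ t * (q - 1) ^ t := by rw [mul_pow]
      _ ≤ (2 * t).choose t * (q - 1) ^ t :=
          Nat.mul_le_mul_right _ (two_pow_le_centralBinom t)
      _ ≤ m.choose t * (q - 1) ^ t :=
          Nat.mul_le_mul_right _ (Nat.choose_le_choose t hmt)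
    have hps : q ^ (m - t) = q ^ t * q ^ (m - 2 * t) := by
      rw [← pow_add]; congr 1; omega
    have hps2 : q ^ (m - t) * q ^ t = q ^ m := by
      rw [← pow_add]; congr 1; omega
    calc q ^ m - q ^ (m - t) = q ^ (m - t) * (q ^ t - 1) := by
          rw [Nat.mul_sub, mul_one, hps2]
    _ ≤ q ^ (m - t) * (m.choose t * (q - 1) ^ t) := Nat.mul_le_mul_left _ h1
    _ = m.choose t * q ^ t * ((q - 1) ^ t * q ^ (m - 2 * t)) := by
          rw [hps]; ring
  -- label bound
  have hLQ : ((univ : Finset (↥C × Col)).image fun p => Qf p.1 p.2).eraseNone.card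
      ≤ q ^ m - q ^ (m - t) := by
    have hsub : ((univ : Finset (↥C × Col)).image fun p => Qf p.1 p.2).eraseNone
        ⊆ univ.filter (fun v : Fin m → K => v ∉ C) := by
      intro v hv
      rw [Finset.mem_eraseNone, mem_image] at hv
      obtain ⟨p, -, hp⟩ := hv
      rw [mem_filter]
      refine ⟨mem_univ _, ?_⟩
      intro hvC
      obtain ⟨hcond, hveq⟩ := hQsome p.1 p.2 v hp
      have hxC : v - p.1.1 ∈ C := sub_mem hvC p.1.2
      have hx0 : v - p.1.1 = 0 := by
        apply hzero _ hxC p.2.1.1 (le_of_eq p.2.2.1)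
        intro i hi
        rw [Pi.sub_apply, hveq]
        simp only [if_neg hi, sub_self]
      obtain ⟨i, hi⟩ := Finset.card_pos.mp
        (show 0 < p.2.1.1.card by rw [p.2.2.1]; omega)
      have e1 : v i = p.2.1.2 i := by rw [hveq]; exact if_pos hi
      have e2 : v i = p.1.1 i := by
        have := congrFun hx0 i
        rw [Pi.sub_apply] at this
        have h0 : (0 : Fin m → K) i = 0 := rfl
        rw [h0] at this
        exact sub_eq_zero.mp this
      exact hcond i hi (e2.symm.trans e1)
    refine le_trans (Finset.card_le_card hsub) ?_
    have h2 := Finset.card_filter_add_card_filter_not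
      (s := (univ : Finset (Fin m → K))) (p := fun v : Fin m → K => v ∈ C)
    rw [card_univ, Fintype.card_fun, hcard, Fintype.card_fin] at h2
    have h3 : (univ.filter (fun v : Fin m → K => v ∈ C)).card = q ^ (m - t) := by
      rw [← Fintype.card_subtype]
      exact hCcard
    rw [h3] at h2
    have h4 : (univ.filter (fun v : Fin m → K => v ∉ C))
        = univ.filter (fun v : Fin m → K => ¬ v ∈ C) := rfl
    rw [h4]
    omega
  exact pda_master (q ^ (m - t)) (m.choose t * q ^ t)
    (q ^ (m - t) - (q - 1) ^ t * q ^ (m - 2 * t)) (q ^ m - q ^ (m - t))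
    Qf hCcard hColcard hpairQ hZQ hTQ hLQ
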